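/- Integration by parts for the matrix model: for any polynomial h ∈ ℝ[x] and the probability measure dμ_{0,n}(A) = exp(−n Tr(p(A) + ψ(n))) dA on n×n self-adjoint matrices with p a polynomial, ∫ Tr(h'(A)) dμ_{0,n}(A) = n ∫ Tr(h(A)) Tr(p'(A)) dμ_{0,n}(A). -/

import Mathlib

set_option maxHeartbeats 1000000

open MeasureTheory Polynomial

/-- `Tr(q(A))` for a self-adjoint matrix `A`, via functional calculus: the sum
of `q` evaluated at the eigenvalues of `A`. -/
noncomputable def trFC {nn : ℕ} (q : Polynomial ℝ)
    (A : selfAdjoint (Matrix (Fin nn) (Fin nn) ℂ)) : ℝ :=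
  ∑ i, q.eval (Matrix.IsHermitian.eigenvalues A.2 i)

section Aux

variable {n : ℕ}

/-- `Tr(q(M))` computed at the matrix level, via `aeval`. -/
noncomputable def trPoly (q : Polynomial ℝ) (M : Matrix (Fin n) (Fin n) ℂ) : ℝ :=
  (Matrix.trace (Polynomial.aeval M (q.map (algebraMap ℝ ℂ)))).re

theorem conj_pow' (u d : Matrix (Fin n) (Fin n) ℂ) (h1 : u * star u = 1)
    (h2 : star u * u = 1) (k : ℕ) : (u * d * star u) ^ k = u * d ^ k * star u := by
  induction k with
  | zero => simp [h1]
  | succ k ih =>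
    rw [pow_succ, ih, pow_succ]
    simp only [mul_assoc]
    rw [show star u * (u * (d * star u)) = d * star u by rw [← mul_assoc, h2, one_mul]]

theorem trace_pow_eq (A : selfAdjoint (Matrix (Fin n) (Fin n) ℂ)) (k : ℕ) :
    Matrix.trace ((A : Matrix (Fin n) (Fin n) ℂ) ^ k)
      = ((∑ i, (Matrix.IsHermitian.eigenvalues A.2 i) ^ k : ℝ) : ℂ) := by
  have hA : (A : Matrix (Fin n) (Fin n) ℂ).IsHermitian := A.2
  set U := (Matrix.IsHermitian.eigenvectorUnitary hA : Matrix (Fin n) (Fin n) ℂ) with hU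
  have h2 : star U * U = 1 := Matrix.UnitaryGroup.star_mul_self _
  have h1 : U * star U = 1 :=
    Matrix.mem_unitaryGroup_iff.mp (Matrix.IsHermitian.eigenvectorUnitary hA).2
  calc Matrix.trace ((A : Matrix (Fin n) (Fin n) ℂ) ^ k)
      = Matrix.trace ((U * Matrix.diagonal (RCLike.ofReal ∘ hA.eigenvalues) * star U) ^ k) := by
        conv_lhs => rw [hA.spectral_theorem]
        rfl
    _ = Matrix.trace (U * (Matrix.diagonal (RCLike.ofReal ∘ hA.eigenvalues)) ^ k * star U) := by
        rw [conj_pow' U _ h1 h2]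
    _ = Matrix.trace ((Matrix.diagonal (RCLike.ofReal ∘ hA.eigenvalues)) ^ k) := by
        rw [mul_assoc, Matrix.trace_mul_comm, mul_assoc, h2, mul_one]
    _ = _ := by
        rw [Matrix.diagonal_pow, Matrix.trace_diagonal]
        push_cast
        simp

theorem trFC_eq (q : Polynomial ℝ) (A : selfAdjoint (Matrix (Fin n) (Fin n) ℂ)) :
    trFC q A = trPoly q (A : Matrix (Fin n) (Fin n) ℂ) := by
  unfold trFC trPoly
  rw [aeval_eq_sum_range' (n := q.natDegree + 1)
    (lt_of_le_of_lt natDegree_map_le (Nat.lt_succ_self _))]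
  rw [Matrix.trace_sum]
  have : ∀ k, Matrix.trace ((q.map (algebraMap ℝ ℂ)).coeff k • (A : Matrix (Fin n) (Fin n) ℂ) ^ k)
      = ((q.coeff k * ∑ i, (Matrix.IsHermitian.eigenvalues A.2 i) ^ k : ℝ) : ℂ) := by
    intro k
    rw [Matrix.trace_smul, coeff_map, trace_pow_eq]
    push_cast
    simp [smul_eq_mul]
  simp_rw [this]
  rw [Complex.re_sum]
  simp only [Complex.ofReal_re]
  simp_rw [Finset.mul_sum]
  rw [Finset.sum_comm]
  congr 1
  ext i
  rw [eval_eq_sum_range]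

theorem trPoly_continuous (q : Polynomial ℝ) : Continuous (trPoly (n := n) q) := by
  unfold trPoly
  apply Complex.continuous_re.comp
  apply Continuous.matrix_trace
  have : (fun M : Matrix (Fin n) (Fin n) ℂ => Polynomial.aeval M (q.map (algebraMap ℝ ℂ)))
      = fun M => ∑ i ∈ Finset.range ((q.map (algebraMap ℝ ℂ)).natDegree + 1),
          (q.map (algebraMap ℝ ℂ)).coeff i • M ^ i := by
    ext M
    rw [aeval_eq_sum_range]
  rw [this]
  exact continuous_finset_sum _ fun i _ => by fun_prop

theorem trPoly_shift (q : Polynomial ℝ) (s : ℝ) (M : Matrix (Fin n) (Fin n) ℂ) :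
    trPoly q (M + (s : ℂ) • 1) = trPoly (q.comp (X + C s)) M := by
  unfold trPoly
  rw [Polynomial.map_comp, Polynomial.map_add, Polynomial.map_X, Polynomial.map_C,
    aeval_comp]
  congr 3
  rw [map_add, aeval_X, aeval_C, Algebra.algebraMap_eq_smul_one, Complex.coe_algebraMap]

theorem shift_coe (A : selfAdjoint (Matrix (Fin n) (Fin n) ℂ)) (s : ℝ) :
    ((A + s • (1 : selfAdjoint (Matrix (Fin n) (Fin n) ℂ))) : Matrix (Fin n) (Fin n) ℂ)
      = (A : Matrix (Fin n) (Fin n) ℂ) + (s : ℂ) • 1 := by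
  congr 1

theorem shift_coe' (A : selfAdjoint (Matrix (Fin n) (Fin n) ℂ)) (s : ℝ) :
    (((A + s • (1 : selfAdjoint (Matrix (Fin n) (Fin n) ℂ))) :
        selfAdjoint (Matrix (Fin n) (Fin n) ℂ)) : Matrix (Fin n) (Fin n) ℂ)
      = (A : Matrix (Fin n) (Fin n) ℂ) + (s : ℂ) • 1 :=
  shift_coe A s

theorem trFC_shift (q : Polynomial ℝ) (A : selfAdjoint (Matrix (Fin n) (Fin n) ℂ)) (t : ℝ) :
    trFC q (A + t • 1) = ∑ i, q.eval (Matrix.IsHermitian.eigenvalues A.2 i + t) := by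
  rw [trFC_eq, shift_coe', trPoly_shift, ← trFC_eq]
  unfold trFC
  simp [eval_comp]

theorem key_deriv (hh pp : Polynomial ℝ) (nn' ψ : ℝ)
    (A : selfAdjoint (Matrix (Fin n) (Fin n) ℂ)) (s : ℝ) :
    HasDerivAt (fun t => trFC hh (A + t • 1) *
        Real.exp (-nn' * trFC pp (A + t • 1) - nn' ^ 2 * ψ))
      (trFC (derivative hh) (A + s • 1) *
          Real.exp (-nn' * trFC pp (A + s • 1) - nn' ^ 2 * ψ)
        - nn' * (trFC hh (A + s • 1) * trFC (derivative pp) (A + s • 1) *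
          Real.exp (-nn' * trFC pp (A + s • 1) - nn' ^ 2 * ψ))) s := by
  have dphi : ∀ q : Polynomial ℝ, HasDerivAt
      (fun t => ∑ i, q.eval (Matrix.IsHermitian.eigenvalues A.2 i + t))
      (∑ i, (derivative q).eval (Matrix.IsHermitian.eigenvalues A.2 i + s)) s := by
    intro q
    apply HasDerivAt.fun_sum
    intro i _
    have := (q.hasDerivAt (Matrix.IsHermitian.eigenvalues A.2 i + s)).comp s
      ((hasDerivAt_id s).const_add (Matrix.IsHermitian.eigenvalues A.2 i))
    simpa [Function.comp_def] using this
  simp only [trFC_shift]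
  have d1 := dphi hh
  have d2 := dphi pp
  have d3 : HasDerivAt (fun t => Real.exp
      (-nn' * (∑ i, pp.eval (Matrix.IsHermitian.eigenvalues A.2 i + t)) - nn' ^ 2 * ψ))
      (Real.exp (-nn' * (∑ i, pp.eval (Matrix.IsHermitian.eigenvalues A.2 i + s)) - nn' ^ 2 * ψ)
        * (-nn' * (∑ i, (derivative pp).eval (Matrix.IsHermitian.eigenvalues A.2 i + s)))) s := by
    have := ((d2.const_mul (-nn')).sub_const (nn' ^ 2 * ψ)).exp
    simpa [mul_comm] using this
  have := d1.fun_mul d3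
  exact this.congr_deriv (by ring)

end Aux

theorem matrix_integration_by_parts
    (nn : ℕ) (hnn : 0 < nn)
    [MeasurableSpace (selfAdjoint (Matrix (Fin nn) (Fin nn) ℂ))]
    [BorelSpace (selfAdjoint (Matrix (Fin nn) (Fin nn) ℂ))]
    (ν : Measure (selfAdjoint (Matrix (Fin nn) (Fin nn) ℂ)))
    [ν.IsAddHaarMeasure]
    (p : Polynomial ℝ) (hp : ConvexOn ℝ Set.univ fun x => p.eval x)
    (ψ : ℝ)
    (dens : selfAdjoint (Matrix (Fin nn) (Fin nn) ℂ) → ℝ)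
    (hdens : ∀ A, dens A =
      Real.exp (-(nn : ℝ) * trFC p A - (nn : ℝ) ^ 2 * ψ))
    -- dμ_{0,n} is a probability measure
    (hprob : ∫ A, dens A ∂ν = 1)
    -- all polynomial moments exist
    (hmom : ∀ q q' : Polynomial ℝ,
      Integrable (fun A => trFC q A * trFC q' A * dens A) ν)
    (h : Polynomial ℝ) :
    ∫ A, trFC (derivative h) A * dens A ∂ν =
      (nn : ℝ) * ∫ A, trFC h A * trFC (derivative p) A * dens A ∂ν := by
  -- single-trace integrability
  have trFC_one : ∀ A : selfAdjoint (Matrix (Fin nn) (Fin nn) ℂ), trFC (C 1) A = (nn : ℝ) := by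
    intro A
    simp [trFC]
  have hint1 : ∀ q : Polynomial ℝ, Integrable (fun A => trFC q A * dens A) ν := by
    intro q
    have e : (fun A : selfAdjoint (Matrix (Fin nn) (Fin nn) ℂ) => trFC q A * dens A)
        = fun A => (nn : ℝ)⁻¹ * (trFC q A * trFC (C 1) A * dens A) := by
      funext A
      rw [trFC_one]
      have : ((nn : ℝ)) ≠ 0 := Nat.cast_ne_zero.mpr hnn.ne'
      field_simp
    rw [e]
    exact (hmom q (C 1)).const_mul ((nn : ℝ)⁻¹)
  obtain ⟨f, hf_def⟩ : ∃ f : selfAdjoint (Matrix (Fin nn) (Fin nn) ℂ) → ℝ,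
      f = fun A => trFC h A * dens A := ⟨_, rfl⟩
  obtain ⟨g, hg_def⟩ : ∃ g : selfAdjoint (Matrix (Fin nn) (Fin nn) ℂ) → ℝ,
      g = fun A => trFC (derivative h) A * dens A
        - (nn : ℝ) * (trFC h A * trFC (derivative p) A * dens A) := ⟨_, rfl⟩
  have hf : Integrable f ν := by rw [hf_def]; exact hint1 h
  have hg : Integrable g ν := by
    rw [hg_def]
    exact (hint1 (derivative h)).sub ((hmom h (derivative p)).const_mul ((nn : ℝ)))
  -- continuity of g ∘ shift, jointly
  have gform : ∀ A : selfAdjoint (Matrix (Fin nn) (Fin nn) ℂ), g A = trPoly (derivative h) (A : Matrix (Fin nn) (Fin nn) ℂ) *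
        Real.exp (-(nn : ℝ) * trPoly p (A : Matrix (Fin nn) (Fin nn) ℂ) - (nn : ℝ) ^ 2 * ψ)
      - (nn : ℝ) * (trPoly h (A : Matrix (Fin nn) (Fin nn) ℂ) *
        trPoly (derivative p) (A : Matrix (Fin nn) (Fin nn) ℂ) *
        Real.exp (-(nn : ℝ) * trPoly p (A : Matrix (Fin nn) (Fin nn) ℂ)
          - (nn : ℝ) ^ 2 * ψ)) := by
    intro A
    simp only [hg_def, hdens A, trFC_eq]
  have gcont : Continuous fun sA : ℝ × selfAdjoint (Matrix (Fin nn) (Fin nn) ℂ) => g (sA.2 + sA.1 • 1) := by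
    have hmap : Continuous fun sA : ℝ × selfAdjoint (Matrix (Fin nn) (Fin nn) ℂ) =>
        ((sA.2 + sA.1 • 1 : selfAdjoint (Matrix (Fin nn) (Fin nn) ℂ)) : Matrix (Fin nn) (Fin nn) ℂ) := by
      simp only [shift_coe']
      exact (continuous_subtype_val.comp continuous_snd).add
        ((Complex.continuous_ofReal.comp continuous_fst).smul continuous_const)
    have : ∀ sA : ℝ × selfAdjoint (Matrix (Fin nn) (Fin nn) ℂ), g (sA.2 + sA.1 • 1) =
        (fun M => trPoly (derivative h) M *
            Real.exp (-(nn : ℝ) * trPoly p M - (nn : ℝ) ^ 2 * ψ)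
          - (nn : ℝ) * (trPoly h M * trPoly (derivative p) M *
            Real.exp (-(nn : ℝ) * trPoly p M - (nn : ℝ) ^ 2 * ψ)))
          ((sA.2 + sA.1 • 1 : selfAdjoint (Matrix (Fin nn) (Fin nn) ℂ)) : Matrix (Fin nn) (Fin nn) ℂ) := by
      intro sA; exact gform _
    simp only [this]
    have hbig : Continuous (fun M : Matrix (Fin nn) (Fin nn) ℂ => trPoly (derivative h) M *
            Real.exp (-(nn : ℝ) * trPoly p M - (nn : ℝ) ^ 2 * ψ)
          - (nn : ℝ) * (trPoly h M * trPoly (derivative p) M *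
            Real.exp (-(nn : ℝ) * trPoly p M - (nn : ℝ) ^ 2 * ψ))) := by
      have c1 := trPoly_continuous (n := nn) (derivative h)
      have c2 := trPoly_continuous (n := nn) p
      have c3 := trPoly_continuous (n := nn) h
      have c4 := trPoly_continuous (n := nn) (derivative p)
      have cexp0 : Continuous (fun M : Matrix (Fin nn) (Fin nn) ℂ =>
          Real.exp (-(nn : ℝ) * trPoly p M - (nn : ℝ) ^ 2 * ψ)) :=
        Real.continuous_exp.comp ((continuous_const.mul c2).sub continuous_const)
      exact (c1.mul cexp0).sub (continuous_const.mul ((c3.mul c4).mul cexp0))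
    exact hbig.comp hmap
  -- derivative of the shifted density-weighted trace
  have key : ∀ (A : selfAdjoint (Matrix (Fin nn) (Fin nn) ℂ)) (s : ℝ),
      HasDerivAt (fun t => f (A + t • 1)) (g (A + s • 1)) s := by
    intro A s
    have := key_deriv h p (nn : ℝ) ψ A s
    simp only [hf_def, hg_def, hdens]
    exact this
  -- FTC pointwise
  have ftc : ∀ A : selfAdjoint (Matrix (Fin nn) (Fin nn) ℂ), f (A + (1 : ℝ) • 1) - f A = ∫ s in (0:ℝ)..1, g (A + s • 1) := by
    intro A
    have hcont : Continuous fun s : ℝ => g (A + s • 1) :=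
      gcont.comp (continuous_id.prodMk continuous_const)
    have := intervalIntegral.integral_eq_sub_of_hasDerivAt
      (f := fun t => f (A + t • 1)) (f' := fun s => g (A + s • 1))
      (fun s _ => key A s) (hcont.intervalIntegrable 0 1)
    rw [this]
    simp
  -- translation invariance
  have hinv : ∀ (φ : selfAdjoint (Matrix (Fin nn) (Fin nn) ℂ) → ℝ), ∀ c : selfAdjoint (Matrix (Fin nn) (Fin nn) ℂ), ∫ A, φ (A + c) ∂ν = ∫ A, φ A ∂ν := by
    intro φ c
    exact integral_add_right_eq_self φ c
  -- Step: ∫ (∫_0^1 g(A+s•1) ds) dν = 0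
  have step0 : ∫ A, (∫ s in (0:ℝ)..1, g (A + s • 1)) ∂ν = 0 := by
    have : ∀ A : selfAdjoint (Matrix (Fin nn) (Fin nn) ℂ), (∫ s in (0:ℝ)..1, g (A + s • 1)) = f (A + (1:ℝ) • 1) - f A := by
      intro A; rw [ftc]
    simp only [this]
    rw [integral_sub (hf.comp_add_right _) hf, hinv f ((1:ℝ) • 1), sub_self]
  -- Fubini swap to get ∫ g = 0
  haveI : SigmaCompactSpace (Matrix (Fin nn) (Fin nn) ℂ) :=
    (by infer_instance : SigmaCompactSpace (Fin nn → Fin nn → ℂ))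
  haveI : SigmaCompactSpace (selfAdjoint (Matrix (Fin nn) (Fin nn) ℂ)) := by
    have hclosed : IsClosed {M : Matrix (Fin nn) (Fin nn) ℂ | star M = M} :=
      isClosed_eq continuous_star continuous_id
    exact hclosed.sigmaCompactSpace
  set μr : Measure ℝ := volume.restrict (Set.Ioc (0:ℝ) 1) with hμr
  have hfin : IsFiniteMeasure μr := by
    constructor
    rw [hμr, Measure.restrict_apply_univ, Real.volume_Ioc]
    exact ENNReal.ofReal_lt_top
  have hswap : ∫ A, (∫ s, g (A + s • 1) ∂μr) ∂ν = ∫ s, (∫ A, g (A + s • 1) ∂ν) ∂μr := by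
    refine (integral_integral_swap ?_).symm
    -- Integrable (uncurry fun s A => g (A + s•1)) (μr.prod ν)
    have hmeas : AEStronglyMeasurable (Function.uncurry fun (s : ℝ) (A : selfAdjoint (Matrix (Fin nn) (Fin nn) ℂ)) => g (A + s • 1))
        (μr.prod ν) := by
      apply Continuous.aestronglyMeasurable
      exact gcont
    rw [integrable_prod_iff hmeas]
    constructor
    · refine Filter.Eventually.of_forall fun s => ?_
      simp only [Function.uncurry_apply_pair]
      exact hg.comp_add_right _
    · simp only [Function.uncurry_apply_pair]
      have : ∀ s : ℝ, (∫ A, ‖g (A + s • 1)‖ ∂ν) = ∫ A, ‖g A‖ ∂ν := by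
        intro s
        exact integral_add_right_eq_self (fun A => ‖g A‖) _
      simp only [this]
      exact integrable_const _
  have intg_zero : ∫ A, g A ∂ν = 0 := by
    have e1 : ∀ A : selfAdjoint (Matrix (Fin nn) (Fin nn) ℂ), (∫ s in (0:ℝ)..1, g (A + s • 1)) = ∫ s, g (A + s • 1) ∂μr := by
      intro A
      rw [intervalIntegral.integral_of_le zero_le_one]
    have e2 : ∀ s : ℝ, (∫ A, g (A + s • 1) ∂ν) = ∫ A, g A ∂ν := fun s =>
      integral_add_right_eq_self g _
    have e3 : ∫ _, (∫ A, g A ∂ν) ∂μr = ∫ A, g A ∂ν := by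
      rw [integral_const]
      simp [hμr, Real.volume_Ioc]
    calc ∫ A, g A ∂ν = ∫ s, (∫ A, g (A + s • 1) ∂ν) ∂μr := by rw [← e3]; simp only [e2]
      _ = ∫ A, (∫ s, g (A + s • 1) ∂μr) ∂ν := hswap.symm
      _ = ∫ A, (∫ s in (0:ℝ)..1, g (A + s • 1)) ∂ν := by simp only [e1]
      _ = 0 := step0
  -- conclude
  have := intg_zero
  rw [hg_def] at this
  simp only at this
  rw [integral_sub (hint1 (derivative h)) ((hmom h (derivative p)).const_mul _),
    integral_const_mul, sub_eq_zero] at this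
  exact this
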